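/- Let n ≥ 5 and λ = (n-2, 2). Then for integers 1 ≤ i < j ≤ n-2, one has i ≺ j in P(λ) if and only if i ≤ ⌊(n-1)/2⌋, j ≥ ⌊(n-1)/2⌋ + 1, and j - ⌊(n-1)/2⌋ ≤ i. Consequently, the minimal elements of P(λ)∖{0} are {1, …, ⌊(n-1)/2⌋}, the maximal elements are {⌊(n-1)/2⌋+1, …, n-2}, and the element ⌊(n-1)/2⌋ + j lies above exactly {j, j+1, …, ⌊(n-1)/2⌋}. -/
import Mathlib


/-- The lattice point `p(b)` of the fundamental parallelepiped `Π_λ`: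
`p(b) = ((Σ_t ⌈bλ_t/(n-1)⌉) - b, ⌈bλ_1/(n-1)⌉, …, ⌈bλ_d/(n-1)⌉) ∈ ℤ^{d+1}`. -/
def pfun (d n : ℕ) (lam : Fin d → ℕ) (b : ℤ) : Fin (d + 1) → ℤ :=
  Fin.cons ((∑ t, ⌈(b * lam t : ℚ) / ((n : ℚ) - 1)⌉) - b)
    (fun t => ⌈(b * lam t : ℚ) / ((n : ℚ) - 1)⌉)

/-- The relation `i ≺ j` of the fundamental parallelepiped poset `P(λ)` on `{0, …, n-2}`:
`i ≺ j` iff there exists `0 < ℓ < n-1` with `p(i) + p(ℓ) = p(j)`. -/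
def precRel (d n : ℕ) (lam : Fin d → ℕ) (i j : ℤ) : Prop :=
  ∃ l : ℤ, 0 < l ∧ l < (n : ℤ) - 1 ∧ pfun d n lam i + pfun d n lam l = pfun d n lam j

lemma ceil1 (n : ℕ) (hn : 5 ≤ n) (b : ℤ) (hb1 : 1 ≤ b) (hb2 : b ≤ (n:ℤ)-2) :
    ⌈((b:ℚ) * (((n-2:ℕ)):ℚ)) / ((n : ℚ) - 1)⌉ = b := by
  have hN : (0:ℚ) < (n:ℚ) - 1 := by
    have : (5:ℚ) ≤ (n:ℚ) := by exact_mod_cast hn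
    linarith
  have hc : ((n-2:ℕ):ℚ) = (n:ℚ)-2 := by
    rw [Nat.cast_sub (by omega : 2 ≤ n)]; norm_num
  have hb1' : (1:ℚ) ≤ (b:ℚ) := by exact_mod_cast hb1
  have hb2' : (b:ℚ) ≤ (n:ℚ) - 2 := by exact_mod_cast hb2
  rw [hc, Int.ceil_eq_iff]
  constructor
  · rw [lt_div_iff₀ hN]; nlinarith
  · rw [div_le_iff₀ hN]; nlinarith

lemma ceil2 (n : ℕ) (hn : 5 ≤ n) (b : ℤ) (hb1 : 1 ≤ b) (hb2 : b ≤ (n:ℤ)-2) :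
    ⌈((b:ℚ) * ((2:ℕ):ℚ)) / ((n : ℚ) - 1)⌉ = if 2*b ≤ (n:ℤ)-1 then 1 else 2 := by
  have hN : (0:ℚ) < (n:ℚ) - 1 := by
    have : (5:ℚ) ≤ (n:ℚ) := by exact_mod_cast hn
    linarith
  have hb1' : (1:ℚ) ≤ (b:ℚ) := by exact_mod_cast hb1
  have hb2' : (b:ℚ) ≤ (n:ℚ) - 2 := by exact_mod_cast hb2
  split_ifs with h
  · have h' : 2*(b:ℚ) ≤ (n:ℚ) - 1 := by exact_mod_cast h
    rw [Int.ceil_eq_iff]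
    constructor
    · rw [lt_div_iff₀ hN]; push_cast; nlinarith
    · rw [div_le_iff₀ hN]; push_cast; nlinarith
  · have h' : (n:ℚ) - 1 < 2*(b:ℚ) := by exact_mod_cast not_le.mp h
    rw [Int.ceil_eq_iff]
    constructor
    · rw [lt_div_iff₀ hN]; push_cast; nlinarith
    · rw [div_le_iff₀ hN]; push_cast; nlinarith

lemma pf1 (n : ℕ) (b : ℤ) :
    pfun 2 n ![n-2,2] b 1 = ⌈((b:ℚ) * (((n-2:ℕ)):ℚ)) / ((n : ℚ) - 1)⌉ := rfl

lemma pf2 (n : ℕ) (b : ℤ) :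
    pfun 2 n ![n-2,2] b 2 = ⌈((b:ℚ) * ((2:ℕ):ℚ)) / ((n : ℚ) - 1)⌉ := rfl

lemma pf0 (n : ℕ) (b : ℤ) :
    pfun 2 n ![n-2,2] b 0 = pfun 2 n ![n-2,2] b 1 + pfun 2 n ![n-2,2] b 2 - b := by
  show (∑ t, ⌈((b:ℚ) * ((![n-2,2] t : ℕ):ℚ)) / ((n : ℚ) - 1)⌉) - b = _
  rw [Fin.sum_univ_two]; rfl

/-- Let `n ≥ 5` and `λ = (n-2, 2)`. For integers `1 ≤ i < j ≤ n-2`, one has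
`i ≺ j` in `P(λ)` if and only if `i ≤ ⌊(n-1)/2⌋`, `j ≥ ⌊(n-1)/2⌋ + 1`, and
`j - ⌊(n-1)/2⌋ ≤ i`.  (Consequently the minimal elements of `P(λ)∖{0}` are
`{1, …, ⌊(n-1)/2⌋}`, the maximal elements are `{⌊(n-1)/2⌋+1, …, n-2}`, and the element
`⌊(n-1)/2⌋ + j` lies above exactly `{j, j+1, …, ⌊(n-1)/2⌋}`.) -/
theorem stmt_4 (n : ℕ) (hn : 5 ≤ n)
    (i j : ℤ) (hi : 1 ≤ i) (hij : i < j) (hj : j ≤ (n : ℤ) - 2) :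
    precRel 2 n ![n - 2, 2] i j ↔
      (i ≤ ((n : ℤ) - 1) / 2 ∧ ((n : ℤ) - 1) / 2 + 1 ≤ j ∧ j - ((n : ℤ) - 1) / 2 ≤ i) := by
  constructor
  · rintro ⟨l, hl0, hlN, heq⟩
    have e1 := congrFun heq 1
    have e2 := congrFun heq 2
    simp only [Pi.add_apply] at e1 e2
    rw [pf1, pf1, pf1, ceil1 n hn i hi (by omega), ceil1 n hn l (by omega) (by omega),
      ceil1 n hn j (by omega) hj] at e1
    rw [pf2, pf2, pf2, ceil2 n hn i hi (by omega), ceil2 n hn l (by omega) (by omega),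
      ceil2 n hn j (by omega) hj] at e2
    split_ifs at e2 <;> omega
  · rintro ⟨h1, h2, h3⟩
    refine ⟨j - i, by omega, by omega, ?_⟩
    have H1 : pfun 2 n ![n-2,2] i 1 + pfun 2 n ![n-2,2] (j-i) 1 = pfun 2 n ![n-2,2] j 1 := by
      rw [pf1, pf1, pf1, ceil1 n hn i hi (by omega), ceil1 n hn (j-i) (by omega) (by omega),
        ceil1 n hn j (by omega) hj]
      ring
    have H2 : pfun 2 n ![n-2,2] i 2 + pfun 2 n ![n-2,2] (j-i) 2 = pfun 2 n ![n-2,2] j 2 := by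
      rw [pf2, pf2, pf2, ceil2 n hn i hi (by omega), ceil2 n hn (j-i) (by omega) (by omega),
        ceil2 n hn j (by omega) hj]
      rw [if_pos (by omega), if_pos (by omega), if_neg (by omega)]; norm_num
    have H0 : pfun 2 n ![n-2,2] i 0 + pfun 2 n ![n-2,2] (j-i) 0 = pfun 2 n ![n-2,2] j 0 := by
      rw [pf0, pf0, pf0]; linarith
    funext k
    fin_cases k <;> simp only [Pi.add_apply]
    · exact H0
    · exact H1
    · exact H2
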